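/- arXiv:1312.5620 — 3 statements merged into one kernel-verified Lean document; each statement's English description precedes it below -/
import Mathlib

section
/- Let G be a graph obtained from a 4-cycle C by attaching pendant edges (possibly none) at its vertices. Then the strong chromatic index of G equals the maximum of d(u) + d(v) over all edges uv of the cycle C. -/
open SimpleGraph

/-- Two edges of `G` are within distance at most 2: they share a vertex, or some edge of `G`
joins an endpoint of one to an endpoint of the other. -/
def EdgesNear {V : Type*} (G : SimpleGraph V) (e f : Sym2 V) : Prop :=
  (∃ x, x ∈ e ∧ x ∈ f) ∨ (∃ x y, x ∈ e ∧ y ∈ f ∧ G.Adj x y)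

/-- `c` assigns distinct colours to any two distinct edges of `G` at distance at most 2. -/
def IsStrongEdgeColoringOn {V : Type*} (G : SimpleGraph V) (c : Sym2 V → ℕ) : Prop :=
  ∀ e ∈ G.edgeSet, ∀ f ∈ G.edgeSet, e ≠ f → EdgesNear G e f → c e ≠ c f

/-- A strong edge-colouring of `G` with `k` colours. -/
def IsStrongEdgeColoring {V : Type*} (G : SimpleGraph V) (k : ℕ) (c : Sym2 V → ℕ) : Prop :=
  (∀ e ∈ G.edgeSet, c e < k) ∧ IsStrongEdgeColoringOn G c

/-- The strong chromatic index of `G`. -/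
noncomputable def sci {V : Type*} (G : SimpleGraph V) : ℕ :=
  sInf {k | ∃ c : Sym2 V → ℕ, IsStrongEdgeColoring G k c}

/-- Degree of a vertex (cardinality of its neighbour set). -/
noncomputable def sdeg {V : Type*} (G : SimpleGraph V) (v : V) : ℕ :=
  (G.neighborSet v).ncard

/-- The graph obtained from the cycle `C_n` (on vertices `Sum.inl i`, `i : Fin n`)
by attaching `p i` pendant edges at the cycle vertex `i` (the pendant neighbours of `i`
are the vertices `Sum.inr ⟨i, x⟩`). -/
def pufferGraph (n : ℕ) (p : Fin n → ℕ) :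
    SimpleGraph (Fin n ⊕ Σ i : Fin n, Fin (p i)) :=
  SimpleGraph.fromRel (fun a b =>
    (∃ i j : Fin n, a = Sum.inl i ∧ b = Sum.inl j ∧ (SimpleGraph.cycleGraph n).Adj i j) ∨
    (∃ (i : Fin n) (x : Fin (p i)), a = Sum.inl i ∧ b = Sum.inr ⟨i, x⟩))

open Classical in
/-- The maximum of `d(u) + d(v)` over the edges `uv` of the cycle of `pufferGraph n p`. -/
noncomputable def maxCycleDegSum (n : ℕ) (p : Fin n → ℕ) : ℕ :=
  Finset.univ.sup fun q : Fin n × Fin n =>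
    if (SimpleGraph.cycleGraph n).Adj q.1 q.2 then
      sdeg (pufferGraph n p) (Sum.inl q.1) + sdeg (pufferGraph n p) (Sum.inl q.2)
    else 0

variable {n : ℕ} {p : Fin n → ℕ}

lemma puffer_adj_inl_inl {i j : Fin n} :
    (pufferGraph n p).Adj (Sum.inl i) (Sum.inl j) ↔ (cycleGraph n).Adj i j := by
  simp only [pufferGraph, fromRel_adj, ne_eq, Sum.inl.injEq]
  constructor
  · rintro ⟨hne, h | h⟩ <;> rcases h with (⟨a,b,ha,hb,hab⟩ | ⟨a,x,ha,hb⟩) <;> simp_all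
    · exact hab.symm
  · intro h
    exact ⟨fun he => (cycleGraph n).irrefl (he ▸ h), Or.inl (Or.inl ⟨i, j, rfl, rfl, h⟩)⟩

lemma puffer_adj_inl_inr {i : Fin n} {s : Σ i : Fin n, Fin (p i)} :
    (pufferGraph n p).Adj (Sum.inl i) (Sum.inr s) ↔ s.1 = i := by
  simp only [pufferGraph, fromRel_adj, ne_eq]
  constructor
  · rintro ⟨hne, h | h⟩ <;> rcases h with (⟨a,b,ha,hb,hab⟩ | ⟨a,x,ha,hb⟩) <;> simp_all
  · rintro rfl
    exact ⟨by simp, Or.inl (Or.inr ⟨s.1, s.2, rfl, rfl⟩)⟩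

lemma puffer_not_adj_inr_inr {s t : Σ i : Fin n, Fin (p i)} :
    ¬ (pufferGraph n p).Adj (Sum.inr s) (Sum.inr t) := by
  simp only [pufferGraph, fromRel_adj, ne_eq]
  rintro ⟨hne, h | h⟩ <;> rcases h with (⟨a,b,ha,hb,hab⟩ | ⟨a,x,ha,hb⟩) <;> simp_all

lemma puffer_neighborSet_inl (i : Fin n) :
    (pufferGraph n p).neighborSet (Sum.inl i) =
      Sum.inl '' (cycleGraph n).neighborSet i ∪
      Sum.inr '' (Set.range (Sigma.mk i) : Set (Σ j : Fin n, Fin (p j))) := by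
  ext w
  cases w with
  | inl j =>
    simp [mem_neighborSet, puffer_adj_inl_inl]
  | inr s =>
    simp only [mem_neighborSet, puffer_adj_inl_inr, Set.mem_union, Set.mem_image,
      Set.mem_range]
    constructor
    · rintro rfl
      exact Or.inr ⟨s, ⟨s.2, rfl⟩, rfl⟩
    · rintro (⟨j, _, h⟩ | ⟨t, ⟨x, hx⟩, ht⟩)
      · exact absurd h (by simp)
      · cases ht; cases hx; rfl

lemma sdeg_inl (p : Fin 4 → ℕ) (i : Fin 4) :
    sdeg (pufferGraph 4 p) (Sum.inl i) = 2 + p i := by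
  have hrange : (Set.range (Sigma.mk i) : Set (Σ j : Fin 4, Fin (p j))).ncard = p i := by
    rw [← Nat.card_coe_set_eq, Nat.card_range_of_injective sigma_mk_injective,
      Nat.card_eq_fintype_card, Fintype.card_fin]
  have hdisj : Disjoint (Sum.inl '' (cycleGraph 4).neighborSet i)
      (Sum.inr '' (Set.range (Sigma.mk i) : Set (Σ j : Fin 4, Fin (p j)))) := by
    rw [Set.disjoint_iff]
    rintro w ⟨⟨j, _, hj⟩, ⟨t, _, ht⟩⟩
    rw [← hj] at ht; exact absurd ht (by simp)
  rw [sdeg, puffer_neighborSet_inl, Set.ncard_union_eq hdisj (Set.toFinite _) (Set.toFinite _),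
    Set.ncard_image_of_injective _ Sum.inl_injective,
    Set.ncard_image_of_injective _ Sum.inr_injective, hrange, cycleGraph_neighborSet,
    Set.ncard_pair ((show ∀ j : Fin 4, j - 1 ≠ j + 1 by decide) i)]


lemma le_M (p : Fin 4 → ℕ) {a b : Fin 4} (h : (cycleGraph 4).Adj a b) :
    4 + p a + p b ≤ maxCycleDegSum 4 p := by
  unfold maxCycleDegSum
  have h1 := Finset.le_sup (f := fun q : Fin 4 × Fin 4 =>
    if (SimpleGraph.cycleGraph 4).Adj q.1 q.2 then
      sdeg (pufferGraph 4 p) (Sum.inl q.1) + sdeg (pufferGraph 4 p) (Sum.inl q.2)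
    else 0) (Finset.mem_univ (a, b))
  refine le_trans (le_of_eq ?_) h1
  simp only [if_pos h, sdeg_inl]
  omega

lemma M_exists (p : Fin 4 → ℕ) : ∃ a : Fin 4, maxCycleDegSum 4 p = 4 + p a + p (a + 1) := by
  obtain ⟨q, -, hq⟩ := Finset.exists_mem_eq_sup Finset.univ ⟨(0,1), Finset.mem_univ _⟩
    (fun q : Fin 4 × Fin 4 =>
      if (SimpleGraph.cycleGraph 4).Adj q.1 q.2 then
        sdeg (pufferGraph 4 p) (Sum.inl q.1) + sdeg (pufferGraph 4 p) (Sum.inl q.2)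
      else 0)
  have hM : maxCycleDegSum 4 p =
      if (SimpleGraph.cycleGraph 4).Adj q.1 q.2 then
        sdeg (pufferGraph 4 p) (Sum.inl q.1) + sdeg (pufferGraph 4 p) (Sum.inl q.2)
      else 0 := by
    unfold maxCycleDegSum; exact hq
  by_cases h : (SimpleGraph.cycleGraph 4).Adj q.1 q.2
  · rw [if_pos h, sdeg_inl, sdeg_inl] at hM
    rcases (cycleGraph_adj.mp h) with h1 | h1
    · have h2 : q.1 = q.2 + 1 := by rw [← h1]; abel
      refine ⟨q.2, ?_⟩
      rw [← h2]; omega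
    · have h2 : q.2 = q.1 + 1 := by rw [← h1]; abel
      refine ⟨q.1, ?_⟩
      rw [← h2]; omega
  · rw [if_neg h] at hM
    have := le_M p (a := 0) (b := 1) (by decide)
    omega

abbrev V4 (p : Fin 4 → ℕ) := Fin 4 ⊕ Σ i : Fin 4, Fin (p i)

/-- the edges used in the lower bound -/
def FF (p : Fin 4 → ℕ) (a : Fin 4) : Fin 4 ⊕ (Fin (p a) ⊕ Fin (p (a+1))) → Sym2 (V4 p)
  | Sum.inl i => s(Sum.inl i, Sum.inl (i+1))
  | Sum.inr (Sum.inl x) => s(Sum.inl a, Sum.inr ⟨a, x⟩)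
  | Sum.inr (Sum.inr y) => s(Sum.inl (a+1), Sum.inr ⟨a+1, y⟩)

lemma hAdjSucc : ∀ i : Fin 4, (cycleGraph 4).Adj i (i+1) := by decide

lemma FF_mem (p : Fin 4 → ℕ) (a : Fin 4) (u) : FF p a u ∈ (pufferGraph 4 p).edgeSet := by
  rcases u with i | x | y <;> rw [FF, SimpleGraph.mem_edgeSet]
  · exact puffer_adj_inl_inl.mpr (hAdjSucc i)
  · exact puffer_adj_inl_inr.mpr rfl
  · exact puffer_adj_inl_inr.mpr rfl

lemma FF_inj (p : Fin 4 → ℕ) (a : Fin 4) : Function.Injective (FF p a) := by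
  have h2 : ∀ i : Fin 4, ¬(i = i + 1 + 1) := by decide
  have h3 : ∀ i : Fin 4, ¬(i = i + 1) := by decide
  rintro (i | x | y) (j | x' | y') h <;> simp only [FF, Sym2.eq_iff] at h <;>
    simp_all [Sigma.mk.inj_iff] <;>
    first
    | (rcases h with ⟨rfl, -⟩ | ⟨rfl, hj⟩
       · rfl
       · exact absurd hj.symm (h2 j))
    | exact absurd h.1 (h3 a)
    | exact absurd h.1 (fun hh => h3 (a+1) hh.symm)
    | skip

lemma edgesNear_symm {V : Type*} {G : SimpleGraph V} {e f : Sym2 V}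
    (h : EdgesNear G e f) : EdgesNear G f e := by
  rcases h with ⟨x, h1, h2⟩ | ⟨x, y, h1, h2, h3⟩
  · exact Or.inl ⟨x, h2, h1⟩
  · exact Or.inr ⟨y, x, h2, h1, h3.symm⟩

lemma FF_near (p : Fin 4 → ℕ) (a : Fin 4) (u v) :
    EdgesNear (pufferGraph 4 p) (FF p a u) (FF p a v) := by
  have hN4 : ∀ i j : Fin 4, ∃ u v : Fin 4, (u = i ∨ u = i+1) ∧ (v = j ∨ v = j+1) ∧
      (u = v ∨ (cycleGraph 4).Adj u v) := by decide
  have hNP : ∀ i b : Fin 4, ∃ u : Fin 4, (u = i ∨ u = i+1) ∧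
      (u = b ∨ (cycleGraph 4).Adj u b) := by decide
  have key : ∀ (i b : Fin 4) (x : Fin (p b)),
      EdgesNear (pufferGraph 4 p) s(Sum.inl i, Sum.inl (i+1))
        s(Sum.inl b, Sum.inr ⟨b, x⟩) := by
    intro i b x
    obtain ⟨u, hu, hub⟩ := hNP i b
    rcases hub with rfl | hadj
    · exact Or.inl ⟨Sum.inl u, by simp [Sym2.mem_iff]; tauto, by simp⟩
    · exact Or.inr ⟨Sum.inl u, Sum.inl b, by simp [Sym2.mem_iff]; tauto, by simp,
        puffer_adj_inl_inl.mpr hadj⟩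
  rcases u with i | x | y <;> rcases v with j | x' | y' <;> rw [FF, FF]
  · obtain ⟨u, v, hu, hv, huv⟩ := hN4 i j
    rcases huv with rfl | hadj
    · exact Or.inl ⟨Sum.inl u, by simp [Sym2.mem_iff]; tauto, by simp [Sym2.mem_iff]; tauto⟩
    · exact Or.inr ⟨Sum.inl u, Sum.inl v, by simp [Sym2.mem_iff]; tauto,
        by simp [Sym2.mem_iff]; tauto, puffer_adj_inl_inl.mpr hadj⟩
  · exact key i a x'
  · exact key i (a+1) y'
  · exact edgesNear_symm (key j a x)
  · exact Or.inl ⟨Sum.inl a, by simp, by simp⟩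
  · exact Or.inr ⟨Sum.inl a, Sum.inl (a+1), by simp, by simp,
      puffer_adj_inl_inl.mpr (hAdjSucc a)⟩
  · exact edgesNear_symm (key j (a+1) y)
  · exact edgesNear_symm (Or.inr ⟨Sum.inl a, Sum.inl (a+1), by simp, by simp,
      puffer_adj_inl_inl.mpr (hAdjSucc a)⟩)
  · exact Or.inl ⟨Sum.inl (a+1), by simp, by simp⟩

lemma lower_bound (p : Fin 4 → ℕ) {k : ℕ} {c : Sym2 (V4 p) → ℕ}
    (h : IsStrongEdgeColoring (pufferGraph 4 p) k c) : maxCycleDegSum 4 p ≤ k := by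
  obtain ⟨a, hM⟩ := M_exists p
  rw [hM]
  have hg : Function.Injective (fun u : Fin 4 ⊕ (Fin (p a) ⊕ Fin (p (a+1))) =>
      (⟨c (FF p a u), h.1 _ (FF_mem p a u)⟩ : Fin k)) := by
    intro u v huv
    by_contra hne
    exact h.2 _ (FF_mem p a u) _ (FF_mem p a v) (fun hE => hne (FF_inj p a hE))
      (FF_near p a u v) (congrArg Fin.val huv)
  have := Fintype.card_le_of_injective _ hg
  simp at this
  omega

lemma puffer_adj_inr_inl {i : Fin n} {s : Σ i : Fin n, Fin (p i)} :
    (pufferGraph n p).Adj (Sum.inr s) (Sum.inl i) ↔ s.1 = i := by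
  rw [SimpleGraph.adj_comm]; exact puffer_adj_inl_inr

/-- colour offsets for pendant edges -/
def off (p : Fin 4 → ℕ) (j : Fin 4) : ℕ := if j.val % 2 = 0 then 0 else max (p 0) (p 2)

def colf (p : Fin 4 → ℕ) : V4 p → V4 p → ℕ
  | Sum.inl i, Sum.inl j => if j = i+1 then i.val else if i = j+1 then j.val else 0
  | Sum.inl _, Sum.inr s => 4 + off p s.1 + s.2.val
  | Sum.inr s, Sum.inl _ => 4 + off p s.1 + s.2.val
  | Sum.inr _, Sum.inr _ => 0

lemma colf_symm (p : Fin 4 → ℕ) : ∀ u v : V4 p, colf p u v = colf p v u := by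
  have h2 : ∀ i : Fin 4, ¬(i = i + 1 + 1) := by decide
  rintro (i | s) (j | t) <;> simp only [colf]
  split_ifs with ha hb hb
  · subst ha; exact absurd hb.symm (fun hh => h2 i hh.symm)
  · subst ha; rfl
  · subst hb; rfl
  · rfl

noncomputable def col (p : Fin 4 → ℕ) : Sym2 (V4 p) → ℕ := Sym2.lift ⟨colf p, colf_symm p⟩

lemma edge_classify (p : Fin 4 → ℕ) {e : Sym2 (V4 p)} (he : e ∈ (pufferGraph 4 p).edgeSet) :
    (∃ i : Fin 4, e = s(Sum.inl i, Sum.inl (i+1))) ∨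
    (∃ (i : Fin 4) (x : Fin (p i)), e = s(Sum.inl i, Sum.inr ⟨i, x⟩)) := by
  induction e with
  | _ u v =>
    rw [SimpleGraph.mem_edgeSet] at he
    rcases u with i | s <;> rcases v with j | t
    · rw [puffer_adj_inl_inl] at he
      rcases cycleGraph_adj'.mp he with h | h
      · have : i = j + 1 := sub_eq_iff_eq_add'.mp (Fin.ext h)
        refine Or.inl ⟨j, ?_⟩
        rw [this, Sym2.eq_swap]
      · have : j = i + 1 := sub_eq_iff_eq_add'.mp (Fin.ext h)
        subst this
        exact Or.inl ⟨i, rfl⟩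
    · rw [puffer_adj_inl_inr] at he
      subst he
      exact Or.inr ⟨t.1, t.2, rfl⟩
    · rw [puffer_adj_inr_inl] at he
      subst he
      exact Or.inr ⟨s.1, s.2, Sym2.eq_swap⟩
    · exact absurd he puffer_not_adj_inr_inr

lemma pendant_not_near (p : Fin 4 → ℕ) {b b' : Fin 4} (hbb : b ≠ b')
    (hnadj : ¬ (cycleGraph 4).Adj b b') (x : Fin (p b)) (y : Fin (p b')) :
    ¬ EdgesNear (pufferGraph 4 p) s(Sum.inl b, Sum.inr ⟨b,x⟩) s(Sum.inl b', Sum.inr ⟨b',y⟩) := by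
  rintro (⟨z, hz1, hz2⟩ | ⟨z, w, hz, hw, hadj⟩)
  · rw [Sym2.mem_iff] at hz1 hz2
    rcases hz1 with rfl | rfl <;> rcases hz2 with h | h <;> simp_all
  · rw [Sym2.mem_iff] at hz hw
    rcases hz with rfl | rfl <;> rcases hw with rfl | rfl <;>
      simp_all [puffer_adj_inl_inl, puffer_adj_inl_inr, puffer_adj_inr_inl,
        puffer_not_adj_inr_inr]

lemma off_even {p : Fin 4 → ℕ} {i : Fin 4} (h : i.val % 2 = 0) : off p i = 0 := by
  simp [off, h]

lemma off_odd {p : Fin 4 → ℕ} {i : Fin 4} (h : ¬ i.val % 2 = 0) :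
    off p i = max (p 0) (p 2) := by
  simp [off, h]

lemma p_le_max {p : Fin 4 → ℕ} {i : Fin 4} (h : i.val % 2 = 0) :
    p i ≤ max (p 0) (p 2) := by
  have : i = 0 ∨ i = 2 := by revert h; revert i; decide
  rcases this with rfl | rfl
  · exact le_max_left _ _
  · exact le_max_right _ _

lemma upper (p : Fin 4 → ℕ) :
    IsStrongEdgeColoring (pufferGraph 4 p) (maxCycleDegSum 4 p) (col p) := by
  have h01 := le_M p (a := 0) (b := 1) (by decide)
  have h12 := le_M p (a := 1) (b := 2) (by decide)
  have h23 := le_M p (a := 2) (b := 3) (by decide)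
  have h30 := le_M p (a := 3) (b := 0) (by decide)
  have hmc := max_choice (p 0) (p 2)
  have hfour : ∀ i : Fin 4, i = 0 ∨ i = 1 ∨ i = 2 ∨ i = 3 := by decide
  constructor
  · intro e he
    rcases edge_classify p he with ⟨i, rfl⟩ | ⟨i, x, rfl⟩
    · have hcc : col p s(Sum.inl i, Sum.inl (i+1)) = i.val := by simp [col, colf]
      rw [hcc]
      have := i.isLt
      omega
    · have hcc : col p s(Sum.inl i, Sum.inr ⟨i, x⟩) = 4 + off p i + x.val := by
        simp [col, colf]
      rw [hcc]
      have hx := x.isLt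
      rcases hfour i with rfl | rfl | rfl | rfl <;>
        [rw [off_even (by decide)]; rw [off_odd (by decide)];
         rw [off_even (by decide)]; rw [off_odd (by decide)]] <;>
        rcases hmc with h | h <;> omega
  · intro e he f hf hne hnear hcol
    rcases edge_classify p he with ⟨i, rfl⟩ | ⟨i, x, rfl⟩ <;>
      rcases edge_classify p hf with ⟨j, rfl⟩ | ⟨j, y, rfl⟩ <;>
      simp only [col, colf, Sym2.lift_mk, if_pos rfl, eq_self_iff_true, ite_true] at hcol
    · exact hne (by rw [Fin.val_injective hcol])
    · have := i.isLt; omega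
    · have := j.isLt; omega
    · by_cases hij : i = j
      · subst hij
        have hxy : x.val = y.val := by omega
        exact hne (by rw [Fin.val_injective hxy])
      · by_cases hpar : i.val % 2 = j.val % 2
        · have hadj' : ¬(cycleGraph 4).Adj i j :=
            (show ∀ i j : Fin 4, i ≠ j → i.val % 2 = j.val % 2 → ¬(cycleGraph 4).Adj i j
              from by decide) i j hij hpar
          exact pendant_not_near p hij hadj' x y hnear
        · have hx := x.isLt
          have hy := y.isLt
          by_cases hi : i.val % 2 = 0
          · have hj : ¬ j.val % 2 = 0 := fun h => hpar (by omega)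
            rw [off_even hi, off_odd hj] at hcol
            have := p_le_max (p := p) hi
            omega
          · have hj : j.val % 2 = 0 := by omega
            rw [off_odd hi, off_even hj] at hcol
            have := p_le_max (p := p) hj
            omega


/-- For a 4-cycle with (possibly no) pendant edges attached at its vertices, the strong
chromatic index equals the maximum of `d(u) + d(v)` over the edges `uv` of the cycle. -/
theorem sci_C4_puffer (p : Fin 4 → ℕ) :
    sci (pufferGraph 4 p) = maxCycleDegSum 4 p := by
  have hmem : maxCycleDegSum 4 p ∈
      {k | ∃ c : Sym2 (V4 p) → ℕ, IsStrongEdgeColoring (pufferGraph 4 p) k c} :=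
    ⟨col p, upper p⟩
  refine le_antisymm (Nat.sInf_le hmem) (le_csInf ⟨_, hmem⟩ ?_)
  rintro b ⟨c, hc⟩
  exact lower_bound p hc
end

section
/- Let G be obtained from a 5-cycle with vertices u, v, x, y, z (uv an edge maximizing degree-sum on the cycle) by attaching at least 2 pendant edges at every cycle vertex, and suppose d(u) + d(v) < d(x) + d(y) + d(z) − 3. Let η = ⌈(d(x)+d(y)+d(z)−d(u)−d(v)−3)/2⌉. Then the strong chromatic index of G is at most d(u) + d(v) − 1 + η. -/
open SimpleGraph

namespace SCIC5

variable (p : Fin 5 → ℕ)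

abbrev V5 := Fin 5 ⊕ Σ i : Fin 5, Fin (p i)

/-! ### The numeric layer -/

def pv : ℕ → ℕ
  | 0 => p 0 | 1 => p 1 | 2 => p 2 | 3 => p 3 | 4 => p 4 | _ => 0

def w0' : ℕ := if (p 2 + p 3 + p 4 - (p 0 + p 1)) % 2 = 0 then p 0 else p 0 - 1

def wN : ℕ → ℕ
  | 0 => w0' p | 1 => p 1 - 1 | 2 => p 2 - 1 | 3 => p 3 - 1 | 4 => p 4 - 1 | _ => 0

def SN : ℕ := wN p 0 + wN p 1 + wN p 2 + wN p 3 + wN p 4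

def zN (n : ℕ) : ℕ := SN p / 2 - (wN p ((n + 3) % 5) + wN p ((n + 4) % 5))

def offN : ℕ → ℕ
  | 0 => 0 | 1 => zN p 0 | 2 => zN p 0 + zN p 1
  | 3 => zN p 0 + zN p 1 + zN p 2 | 4 => zN p 0 + zN p 1 + zN p 2 + zN p 3 | _ => 0

def ebN : ℕ := zN p 0 + zN p 1 + zN p 2 + zN p 3 + zN p 4

def pcolN (j x : ℕ) : ℕ :=
  if x < zN p j then offN p j + x
  else if x < zN p j + zN p ((j + 3) % 5) then offN p ((j + 3) % 5) + (x - zN p j)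
  else ebN p + j

def ccolN (i : ℕ) : ℕ := ebN p + (i + 3) % 5

structure Hyp : Prop where
  hp0 : 2 ≤ p 0
  hp1 : 2 ≤ p 1
  hp2 : 2 ≤ p 2
  hp3 : 2 ≤ p 3
  hp4 : 2 ≤ p 4
  h12 : p 1 + p 2 ≤ p 0 + p 1
  h23 : p 2 + p 3 ≤ p 0 + p 1
  h34 : p 3 + p 4 ≤ p 0 + p 1
  h40 : p 4 + p 0 ≤ p 0 + p 1
  hm : p 0 + p 1 + 2 ≤ p 2 + p 3 + p 4

set_option maxHeartbeats 3000000 in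
lemma pcolN_lt (H : Hyp p) {j x : ℕ} (hj : j < 5) (hx : x < pv p j) :
    pcolN p j x < ebN p + 5 := by
  obtain ⟨hp0, hp1, hp2, hp3, hp4, h12, h23, h34, h40, hm⟩ := H
  by_cases hpar : (p 2 + p 3 + p 4 - (p 0 + p 1)) % 2 = 0 <;>
    interval_cases j <;>
    (try simp only [pcolN, ccolN, zN, offN, ebN, wN, SN, w0', pv, hpar, if_true, if_false,
      Nat.reduceMod, Nat.reduceAdd, ite_true, ite_false, Nat.zero_add] at hx ⊢) <;>
    (try simp [ebN, zN, wN, SN, w0', hpar] at hx ⊢) <;> (try split_ifs) <;> omega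

lemma ccolN_lt (i : ℕ) : ccolN p i < ebN p + 5 := by
  simp only [ccolN]; omega

set_option maxHeartbeats 3000000 in
lemma pcolN_inj (H : Hyp p) {j x y : ℕ} (hj : j < 5) (hx : x < pv p j) (hy : y < pv p j)
    (hxy : x ≠ y) : pcolN p j x ≠ pcolN p j y := by
  obtain ⟨hp0, hp1, hp2, hp3, hp4, h12, h23, h34, h40, hm⟩ := H
  by_cases hpar : (p 2 + p 3 + p 4 - (p 0 + p 1)) % 2 = 0 <;>
    interval_cases j <;>
    (try simp only [pcolN, ccolN, zN, offN, ebN, wN, SN, w0', pv, hpar, if_true, if_false,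
      Nat.reduceMod, Nat.reduceAdd, ite_true, ite_false, Nat.zero_add] at hx hy ⊢) <;>
    (try simp [ebN, zN, wN, SN, w0', hpar] at hx hy ⊢) <;> (try split_ifs) <;> omega

set_option maxHeartbeats 3000000 in
lemma pcolN_adj (H : Hyp p) {j x y : ℕ} (hj : j < 5) (hx : x < pv p j)
    (hy : y < pv p ((j + 1) % 5)) : pcolN p j x ≠ pcolN p ((j + 1) % 5) y := by
  obtain ⟨hp0, hp1, hp2, hp3, hp4, h12, h23, h34, h40, hm⟩ := H
  by_cases hpar : (p 2 + p 3 + p 4 - (p 0 + p 1)) % 2 = 0 <;>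
    interval_cases j <;>
    (try simp only [pcolN, ccolN, zN, offN, ebN, wN, SN, w0', pv, hpar, if_true, if_false,
      Nat.reduceMod, Nat.reduceAdd, ite_true, ite_false, Nat.zero_add] at hx hy ⊢) <;>
    (try simp [ebN, zN, wN, SN, w0', hpar] at hx hy ⊢) <;> (try split_ifs) <;> omega

set_option maxHeartbeats 3000000 in
lemma pcolN_ne_ccolN (H : Hyp p) {j i x : ℕ} (hj : j < 5) (hi : i < 5) (hx : x < pv p j)
    (hne : j ≠ (i + 3) % 5) : pcolN p j x ≠ ccolN p i := by
  obtain ⟨hp0, hp1, hp2, hp3, hp4, h12, h23, h34, h40, hm⟩ := H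
  by_cases hpar : (p 2 + p 3 + p 4 - (p 0 + p 1)) % 2 = 0 <;>
    interval_cases j <;> interval_cases i <;>
    (try simp only [pcolN, ccolN, zN, offN, ebN, wN, SN, w0', pv, hpar, if_true, if_false,
      Nat.reduceMod, Nat.reduceAdd, ite_true, ite_false, Nat.zero_add] at hx ⊢) <;>
    (try simp [ebN, zN, wN, SN, w0', hpar] at hx ⊢) <;> (try split_ifs) <;> omega

lemma ccolN_inj {i k : ℕ} (hi : i < 5) (hk : k < 5) (hik : i ≠ k) :
    ccolN p i ≠ ccolN p k := by
  interval_cases i <;> interval_cases k <;> simp only [ccolN] <;> omega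

set_option maxHeartbeats 3000000 in
lemma ebN_le (H : Hyp p) :
    ebN p + 5 ≤ p 0 + 2 + (p 1 + 2) - 1 +
      (p 2 + 2 + (p 3 + 2) + (p 4 + 2) - (p 0 + 2) - (p 1 + 2) - 3 + 1) / 2 := by
  obtain ⟨hp0, hp1, hp2, hp3, hp4, h12, h23, h34, h40, hm⟩ := H
  by_cases hpar : (p 2 + p 3 + p 4 - (p 0 + p 1)) % 2 = 0 <;>
    simp [ebN, zN, offN, wN, SN, w0', hpar] <;> omega

/-! ### Fin bridging -/

lemma pv_eq (j : Fin 5) : pv p j.val = p j := by fin_cases j <;> rfl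

lemma val_add_one (j : Fin 5) : ((j + 1 : Fin 5)).val = (j.val + 1) % 5 := by
  fin_cases j <;> rfl

lemma val_add_three (i : Fin 5) : ((i + 3 : Fin 5)).val = (i.val + 3) % 5 := by
  fin_cases i <;> rfl

lemma ne_conv {i j : Fin 5} (h : j ≠ i + 3) : j.val ≠ (i.val + 3) % 5 := by
  intro hv
  exact h (by rw [Fin.ext_iff, val_add_three]; exact hv)

/-! ### The graph layer -/

lemma puffer_adj (a b : V5 p) :
    (pufferGraph 5 p).Adj a b ↔ a ≠ b ∧
      ((∃ i j : Fin 5, a = Sum.inl i ∧ b = Sum.inl j ∧ (cycleGraph 5).Adj i j) ∨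
       (∃ (i : Fin 5) (x : Fin (p i)), a = Sum.inl i ∧ b = Sum.inr ⟨i, x⟩) ∨
       (∃ i j : Fin 5, b = Sum.inl i ∧ a = Sum.inl j ∧ (cycleGraph 5).Adj i j) ∨
       (∃ (i : Fin 5) (x : Fin (p i)), b = Sum.inl i ∧ a = Sum.inr ⟨i, x⟩)) := by
  show (SimpleGraph.fromRel _).Adj a b ↔ _
  rw [SimpleGraph.fromRel_adj]
  exact and_congr_right fun _ => or_assoc

lemma adj_inl_inl {i j : Fin 5} :
    (pufferGraph 5 p).Adj (Sum.inl i) (Sum.inl j) ↔ (j = i + 1 ∨ i = j + 1) := by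
  have hcyc : ∀ a b : Fin 5, (cycleGraph 5).Adj a b ↔ (b = a + 1 ∨ a = b + 1) := by decide
  rw [puffer_adj]
  constructor
  · rintro ⟨hne, h⟩
    rcases h with ⟨a, b, ha, hb, hadj⟩ | ⟨a, y, ha, hb⟩ | ⟨a, b, ha, hb, hadj⟩ | ⟨a, y, ha, hb⟩
    · cases Sum.inl.inj ha; cases Sum.inl.inj hb; exact (hcyc _ _).mp hadj
    · exact absurd hb (by simp)
    · cases Sum.inl.inj ha; cases Sum.inl.inj hb
      exact ((hcyc _ _).mp hadj).elim (fun h' => Or.inr h') (fun h' => Or.inl h')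
    · exact absurd hb (by simp)
  · intro h
    refine ⟨?_, Or.inl ⟨i, j, rfl, rfl, (hcyc i j).mpr h⟩⟩
    have hne : i ≠ j := (by decide : ∀ a b : Fin 5, (b = a + 1 ∨ a = b + 1) → a ≠ b) i j h
    simpa using hne

lemma adj_inl_inr {i j : Fin 5} {x : Fin (p j)} :
    (pufferGraph 5 p).Adj (Sum.inl i) (Sum.inr ⟨j, x⟩) ↔ i = j := by
  rw [puffer_adj]
  constructor
  · rintro ⟨hne, h⟩
    rcases h with ⟨a, b, ha, hb, hadj⟩ | ⟨a, y, ha, hb⟩ | ⟨a, b, ha, hb, hadj⟩ | ⟨a, y, ha, hb⟩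
    · exact absurd hb (by simp)
    · cases Sum.inl.inj ha
      exact (congrArg Sigma.fst (Sum.inr.inj hb)).symm
    · exact absurd ha (by simp)
    · exact absurd ha (by simp)
  · rintro rfl
    exact ⟨by simp, Or.inr (Or.inl ⟨i, x, rfl, rfl⟩)⟩

lemma not_adj_inr_inr {s t : Σ i : Fin 5, Fin (p i)} :
    ¬ (pufferGraph 5 p).Adj (Sum.inr s) (Sum.inr t) := by
  rw [puffer_adj]
  rintro ⟨hne, h⟩
  rcases h with ⟨a, b, ha, hb, hadj⟩ | ⟨a, y, ha, hb⟩ | ⟨a, b, ha, hb, hadj⟩ | ⟨a, y, ha, hb⟩ <;>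
    simp at ha hb

/-! ### Degrees -/

lemma neighborSet_inl (i : Fin 5) :
    (pufferGraph 5 p).neighborSet (Sum.inl i) =
      {Sum.inl (i + 1), Sum.inl (i - 1)} ∪
        Set.range (fun x : Fin (p i) => (Sum.inr ⟨i, x⟩ : V5 p)) := by
  ext b
  cases b with
  | inl j =>
    simp only [mem_neighborSet, adj_inl_inl, Set.mem_union, Set.mem_insert_iff,
      Set.mem_singleton_iff, Set.mem_range, Sum.inl.injEq]
    constructor
    · rintro (rfl | h)
      · exact Or.inl (Or.inl rfl)
      · exact Or.inl (Or.inr ((by decide : ∀ a b : Fin 5, a = b + 1 → b = a - 1) i j h))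
    · rintro ((h | h) | ⟨y, hy⟩)
      · exact Or.inl h
      · exact Or.inr ((by decide : ∀ a b : Fin 5, b = a - 1 → a = b + 1) i j h)
      · exact absurd hy (by simp)
  | inr t =>
    obtain ⟨j, x⟩ := t
    simp only [mem_neighborSet, adj_inl_inr, Set.mem_union, Set.mem_insert_iff,
      Set.mem_singleton_iff, Set.mem_range]
    constructor
    · rintro rfl
      exact Or.inr ⟨x, rfl⟩
    · rintro ((h | h) | ⟨y, hy⟩)
      · exact absurd h (by simp)
      · exact absurd h (by simp)
      · exact congrArg Sigma.fst (Sum.inr.inj hy)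

lemma sdeg_inl (i : Fin 5) : sdeg (pufferGraph 5 p) (Sum.inl i) = p i + 2 := by
  rw [sdeg, neighborSet_inl]
  have hinj : Function.Injective (fun x : Fin (p i) => (Sum.inr ⟨i, x⟩ : V5 p)) := by
    intro a b hab
    simpa using hab
  have hdisj : Disjoint ({Sum.inl (i + 1), Sum.inl (i - 1)} : Set (V5 p))
      (Set.range fun x : Fin (p i) => (Sum.inr ⟨i, x⟩ : V5 p)) := by
    rw [Set.disjoint_left]
    rintro a ha ⟨y, rfl⟩
    simp at ha
  rw [Set.ncard_union_eq hdisj]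
  have hpair : (Sum.inl (i + 1) : V5 p) ≠ Sum.inl (i - 1) := by
    intro hcc
    exact (by decide : ∀ a : Fin 5, a + 1 ≠ a - 1) i (Sum.inl.inj hcc)
  rw [Set.ncard_pair hpair]
  have hr : (Set.range fun x : Fin (p i) => (Sum.inr ⟨i, x⟩ : V5 p)).ncard = p i := by
    rw [← Nat.card_coe_set_eq, Nat.card_range_of_injective hinj,
      Nat.card_eq_fintype_card, Fintype.card_fin]
  rw [hr]
  omega

/-! ### The colouring -/

def colFun : V5 p → V5 p → ℕ
  | Sum.inl i, Sum.inl j =>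
      if j = i + 1 then ccolN p i.val else if i = j + 1 then ccolN p j.val else 0
  | Sum.inl _, Sum.inr ⟨j, x⟩ => pcolN p j.val x.val
  | Sum.inr ⟨j, x⟩, Sum.inl _ => pcolN p j.val x.val
  | Sum.inr _, Sum.inr _ => 0

lemma colFun_symm (a b : V5 p) : colFun p a b = colFun p b a := by
  rcases a with i | ⟨j, x⟩ <;> rcases b with k | ⟨l, y⟩ <;> simp only [colFun]
  by_cases h1 : k = i + 1 <;> by_cases h2 : i = k + 1
  · exact absurd ⟨h1, h2⟩ ((by decide : ∀ a b : Fin 5, ¬(b = a + 1 ∧ a = b + 1)) i k)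
  · subst h1
    rw [if_pos rfl, if_neg ((by decide : ∀ a : Fin 5, ¬ a = a + 1 + 1) i), if_pos rfl]
  · rw [if_neg h1, if_pos h2, if_pos h2]
  · rw [if_neg h1, if_neg h2, if_neg h2, if_neg h1]

def col : Sym2 (V5 p) → ℕ := Sym2.lift ⟨colFun p, colFun_symm p⟩

lemma col_cycle (i : Fin 5) :
    col p s(Sum.inl i, Sum.inl (i + 1)) = ccolN p i.val := by
  show colFun p (Sum.inl i) (Sum.inl (i + 1)) = _
  simp [colFun]

lemma col_pend (j : Fin 5) (x : Fin (p j)) :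
    col p s(Sum.inl j, Sum.inr ⟨j, x⟩) = pcolN p j.val x.val := rfl

/-! ### Edge classification and nearness -/

lemma edge_cases : ∀ e ∈ (pufferGraph 5 p).edgeSet,
    (∃ i : Fin 5, e = s(Sum.inl i, Sum.inl (i + 1))) ∨
    (∃ (j : Fin 5) (x : Fin (p j)), e = s(Sum.inl j, Sum.inr ⟨j, x⟩)) := by
  intro e
  induction e using Sym2.ind with
  | _ a b =>
    intro he
    rw [mem_edgeSet] at he
    rcases a with i | ⟨j, x⟩ <;> rcases b with k | ⟨l, y⟩
    · rcases (adj_inl_inl p).mp he with rfl | rfl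
      · exact Or.inl ⟨i, rfl⟩
      · exact Or.inl ⟨k, Sym2.eq_swap⟩
    · obtain rfl : i = l := (adj_inl_inr p).mp he
      exact Or.inr ⟨_, y, rfl⟩
    · obtain rfl : k = j := (adj_inl_inr p).mp he.symm
      exact Or.inr ⟨_, x, Sym2.eq_swap⟩
    · exact absurd he (not_adj_inr_inr p)

lemma near_symm {α : Type*} {G : SimpleGraph α} {e f : Sym2 α}
    (h : EdgesNear G e f) : EdgesNear G f e := by
  have h' : (∃ x, x ∈ e ∧ x ∈ f) ∨ (∃ x y, x ∈ e ∧ y ∈ f ∧ G.Adj x y) := h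
  rcases h' with ⟨v, h1, h2⟩ | ⟨a, b, h1, h2, h3⟩
  · exact Or.inl ⟨v, h2, h1⟩
  · exact Or.inr ⟨b, a, h2, h1, h3.symm⟩

lemma near_pp {j k : Fin 5} {x : Fin (p j)} {y : Fin (p k)}
    (hn : EdgesNear (pufferGraph 5 p) s(Sum.inl j, Sum.inr ⟨j, x⟩)
      s(Sum.inl k, Sum.inr ⟨k, y⟩)) :
    k = j ∨ k = j + 1 ∨ j = k + 1 := by
  have hn' : (∃ v, v ∈ s(Sum.inl j, (Sum.inr ⟨j, x⟩ : V5 p)) ∧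
      v ∈ s(Sum.inl k, (Sum.inr ⟨k, y⟩ : V5 p))) ∨
      (∃ a b, a ∈ s(Sum.inl j, (Sum.inr ⟨j, x⟩ : V5 p)) ∧
        b ∈ s(Sum.inl k, (Sum.inr ⟨k, y⟩ : V5 p)) ∧ (pufferGraph 5 p).Adj a b) := hn
  rcases hn' with ⟨v, h1, h2⟩ | ⟨a, b, h1, h2, hadj⟩
  · rw [Sym2.mem_iff] at h1 h2
    rcases h1 with rfl | rfl <;> rcases h2 with h | h
    · exact Or.inl (Sum.inl.inj h).symm
    · exact absurd h (by simp)
    · exact absurd h (by simp)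
    · exact Or.inl (congrArg Sigma.fst (Sum.inr.inj h)).symm
  · rw [Sym2.mem_iff] at h1 h2
    rcases h1 with rfl | rfl <;> rcases h2 with rfl | rfl
    · exact ((adj_inl_inl p).mp hadj).elim (fun h' => Or.inr (Or.inl h'))
        (fun h' => Or.inr (Or.inr h'))
    · exact Or.inl (((adj_inl_inr p).mp hadj).symm)
    · exact Or.inl ((adj_inl_inr p).mp hadj.symm)
    · exact absurd hadj (not_adj_inr_inr p)

lemma near_pc {j i : Fin 5} {x : Fin (p j)}
    (hn : EdgesNear (pufferGraph 5 p) s(Sum.inl j, Sum.inr ⟨j, x⟩)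
      s(Sum.inl i, Sum.inl (i + 1))) :
    j ≠ i + 3 := by
  suffices hkey : j = i ∨ j = i + 1 ∨ i = j + 1 ∨ i + 1 = j + 1 ∨ j = i + 1 + 1 by
    exact (by decide : ∀ a b : Fin 5,
      (b = a ∨ b = a + 1 ∨ a = b + 1 ∨ a + 1 = b + 1 ∨ b = a + 1 + 1) → b ≠ a + 3) i j hkey
  have hn' : (∃ v, v ∈ s(Sum.inl j, (Sum.inr ⟨j, x⟩ : V5 p)) ∧
      v ∈ s((Sum.inl i : V5 p), Sum.inl (i + 1))) ∨
      (∃ a b, a ∈ s(Sum.inl j, (Sum.inr ⟨j, x⟩ : V5 p)) ∧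
        b ∈ s((Sum.inl i : V5 p), Sum.inl (i + 1)) ∧ (pufferGraph 5 p).Adj a b) := hn
  rcases hn' with ⟨v, h1, h2⟩ | ⟨a, b, h1, h2, hadj⟩
  · rw [Sym2.mem_iff] at h1 h2
    rcases h1 with rfl | rfl <;> rcases h2 with h | h
    · exact Or.inl (Sum.inl.inj h)
    · exact Or.inr (Or.inl (Sum.inl.inj h))
    · exact absurd h (by simp)
    · exact absurd h (by simp)
  · rw [Sym2.mem_iff] at h1 h2
    rcases h1 with rfl | rfl <;> rcases h2 with rfl | rfl
    · exact ((adj_inl_inl p).mp hadj).elim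
        (fun h' => Or.inr (Or.inr (Or.inl h')))
        (fun h' => Or.inr (Or.inl h'))
    · exact ((adj_inl_inl p).mp hadj).elim
        (fun h' => Or.inr (Or.inr (Or.inr (Or.inl h'))))
        (fun h' => Or.inr (Or.inr (Or.inr (Or.inr h'))))
    · exact Or.inl ((adj_inl_inr p).mp hadj.symm).symm
    · exact Or.inr (Or.inl ((adj_inl_inr p).mp hadj.symm).symm)

end SCIC5

open SCIC5 in
/-- Consider a 5-cycle with vertices `u, v, x, y, z` in cyclic order (here the cycle vertices
`0, 1, 2, 3, 4` of `pufferGraph 5 p`), with at least 2 pendant edges at every cycle vertex and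
with the edge `uv` maximizing the degree sum over edges of the cycle. If
`d(u) + d(v) < d(x) + d(y) + d(z) - 3`, and `η = ⌈(d(x)+d(y)+d(z)-d(u)-d(v)-3)/2⌉`, then the
strong chromatic index is at most `d(u) + d(v) - 1 + η`. -/
theorem sci_C5_heavy_pendants_le (p : Fin 5 → ℕ) (hp : ∀ i, 2 ≤ p i)
    (hmax : ∀ i : Fin 5,
      sdeg (pufferGraph 5 p) (Sum.inl i) + sdeg (pufferGraph 5 p) (Sum.inl (i + 1)) ≤
        sdeg (pufferGraph 5 p) (Sum.inl 0) + sdeg (pufferGraph 5 p) (Sum.inl 1))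
    (h : sdeg (pufferGraph 5 p) (Sum.inl 0) + sdeg (pufferGraph 5 p) (Sum.inl 1) <
        sdeg (pufferGraph 5 p) (Sum.inl 2) + sdeg (pufferGraph 5 p) (Sum.inl 3) +
          sdeg (pufferGraph 5 p) (Sum.inl 4) - 3) :
    sci (pufferGraph 5 p) ≤
      sdeg (pufferGraph 5 p) (Sum.inl 0) + sdeg (pufferGraph 5 p) (Sum.inl 1) - 1 +
        (sdeg (pufferGraph 5 p) (Sum.inl 2) + sdeg (pufferGraph 5 p) (Sum.inl 3) +
          sdeg (pufferGraph 5 p) (Sum.inl 4) -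
          sdeg (pufferGraph 5 p) (Sum.inl 0) - sdeg (pufferGraph 5 p) (Sum.inl 1) - 3 + 1) / 2 := by
  have hdeg : ∀ i : Fin 5, sdeg (pufferGraph 5 p) (Sum.inl i) = p i + 2 := sdeg_inl p
  rw [hdeg 0, hdeg 1, hdeg 2, hdeg 3, hdeg 4] at h ⊢
  have hpair : ∀ i : Fin 5, p i + p (i + 1) ≤ p 0 + p 1 := by
    intro i
    have h' := hmax i
    simp only [hdeg] at h'
    omega
  have H : Hyp p := by
    refine ⟨hp 0, hp 1, hp 2, hp 3, hp 4, ?_, ?_, ?_, ?_, by omega⟩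
    · simpa using hpair 1
    · simpa using hpair 2
    · simpa using hpair 3
    · simpa using hpair 4
  have hEB := ebN_le p H
  simp only [sci]
  apply Nat.sInf_le
  refine ⟨col p, ?_, ?_⟩
  · intro e he
    have hlt : col p e < ebN p + 5 := by
      rcases edge_cases p e he with ⟨i, rfl⟩ | ⟨j, x, rfl⟩
      · rw [col_cycle]
        exact ccolN_lt p i.val
      · rw [col_pend]
        exact pcolN_lt p H j.isLt (by rw [pv_eq]; exact x.isLt)
    omega
  · intro e he f hf hne hnear
    rcases edge_cases p e he with ⟨i, rfl⟩ | ⟨j, x, rfl⟩ <;>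
      rcases edge_cases p f hf with ⟨k, rfl⟩ | ⟨k, y, rfl⟩
    · rw [col_cycle, col_cycle]
      have hik : i ≠ k := fun hh => hne (by rw [hh])
      exact ccolN_inj p i.isLt k.isLt (fun hv => hik (Fin.ext hv))
    · rw [col_cycle, col_pend]
      have hkne : k ≠ i + 3 := near_pc p (near_symm hnear)
      exact (pcolN_ne_ccolN p H k.isLt i.isLt
        (by rw [pv_eq]; exact y.isLt) (ne_conv hkne)).symm
    · rw [col_pend, col_cycle]
      have hjne : j ≠ k + 3 := near_pc p hnear
      exact pcolN_ne_ccolN p H j.isLt k.isLt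
        (by rw [pv_eq]; exact x.isLt) (ne_conv hjne)
    · rw [col_pend, col_pend]
      rcases near_pp p hnear with hkj | hk | hj
      · subst hkj
        have hxy : x ≠ y := fun heq => hne (by rw [heq])
        exact pcolN_inj p H k.isLt (by rw [pv_eq]; exact x.isLt)
          (by rw [pv_eq]; exact y.isLt) (fun hv => hxy (Fin.ext hv))
      · subst hk
        have hgoal := pcolN_adj p H (j := j.val) (x := x.val) (y := y.val) j.isLt
          (by rw [pv_eq]; exact x.isLt)
          (by rw [← val_add_one, pv_eq]; exact y.isLt)
        rw [← val_add_one] at hgoal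
        exact hgoal
      · subst hj
        have hgoal := pcolN_adj p H (j := k.val) (x := y.val) (y := x.val) k.isLt
          (by rw [pv_eq]; exact y.isLt)
          (by rw [← val_add_one, pv_eq]; exact x.isLt)
        rw [← val_add_one] at hgoal
        exact hgoal.symm
end

section
/- Let G ≠ C_{2k} be obtained from an even cycle C_{2k} with 2k ≥ 6 and 2k ≡ 2 (mod 3) by attaching pendant edges at cycle vertices. Then the strong chromatic index of G is at most 1 + max over edges uv of the cycle of (d(u) + d(v)). -/
open SimpleGraph

namespace PufferAux

open SimpleGraph

/-! ### The cycle-edge colour pattern -/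

def col (i : ℕ) : ℕ := if i < 8 then i % 4 else (i - 8) % 3

lemma col_le (i : ℕ) : col i ≤ 3 := by unfold col; split_ifs <;> omega

lemma col_ne {n i j : ℕ} (h8 : 8 ≤ n) (h3 : n % 3 = 2) (hi : i < n)
    (hj : j = (i + 1) % n ∨ j = (i + 2) % n) : col i ≠ col j := by
  have h1 : (i + 1) % n = if i + 1 = n then 0 else i + 1 := by
    split_ifs with h
    · rw [h, Nat.mod_self]
    · exact Nat.mod_eq_of_lt (by omega)
  have h2 : (i + 2) % n = if i + 2 = n then 0 else if i + 1 = n then 1 else i + 2 := by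
    split_ifs with h h'
    · rw [h, Nat.mod_self]
    · rw [show i + 2 = 1 + n by omega, Nat.add_mod_right, Nat.mod_eq_of_lt (by omega)]
    · exact Nat.mod_eq_of_lt (by omega)
  rcases hj with rfl | rfl
  · rw [h1]; unfold col; split_ifs <;> omega
  · rw [h2]; unfold col; split_ifs <;> omega

lemma fin_add_one_val {n : ℕ} [NeZero n] (h : 2 ≤ n) (a : Fin n) :
    (a + 1).val = (a.val + 1) % n := by
  rw [Fin.add_def, Fin.val_one', Nat.mod_eq_of_lt (show 1 < n by omega)]

lemma colF {n : ℕ} [NeZero n] (h8 : 8 ≤ n) (h3 : n % 3 = 2) (a b : Fin n)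
    (h : b = a + 1 ∨ b = a + 1 + 1) : col a.val ≠ col b.val := by
  have h2 : 2 ≤ n := by omega
  rcases h with h | h
  · rw [h, fin_add_one_val h2]
    exact col_ne h8 h3 a.isLt (Or.inl rfl)
  · rw [h, fin_add_one_val h2, fin_add_one_val h2, Nat.mod_add_mod]
    exact col_ne h8 h3 a.isLt (Or.inr rfl)

lemma cyc_adj {n : ℕ} [NeZero n] (h2 : 2 ≤ n) {i j : Fin n} :
    (cycleGraph n).Adj i j ↔ (j = i + 1 ∨ i = j + 1) := by
  obtain ⟨m, rfl⟩ : ∃ m, n = m + 2 := ⟨n - 2, by omega⟩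
  rw [cycleGraph_adj, sub_eq_iff_eq_add, sub_eq_iff_eq_add,
    add_comm (1 : Fin (m + 2)) j, add_comm (1 : Fin (m + 2)) i]
  exact or_comm

lemma fin_one_ne_zero {n : ℕ} [NeZero n] (h2 : 2 ≤ n) : (1 : Fin n) ≠ 0 := by
  intro h
  have := congrArg Fin.val h
  rw [Fin.val_one', Nat.mod_eq_of_lt (by omega), Fin.val_zero] at this
  omega

lemma fin_two_ne_zero {n : ℕ} [NeZero n] (h3 : 3 ≤ n) : (1 + 1 : Fin n) ≠ 0 := by
  intro h
  have := congrArg Fin.val h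
  rw [fin_add_one_val (by omega), Fin.val_one', Nat.mod_eq_of_lt (show 1 < n by omega),
    Nat.mod_eq_of_lt (by omega), Fin.val_zero] at this
  omega

lemma fin_ne_add_one {n : ℕ} [NeZero n] (h2 : 2 ≤ n) (a : Fin n) : a ≠ a + 1 := by
  intro h
  exact fin_one_ne_zero h2 (left_eq_add.mp h)

lemma fin_ne_add_two {n : ℕ} [NeZero n] (h3 : 3 ≤ n) (a : Fin n) : a ≠ a + 1 + 1 := by
  intro h
  rw [add_assoc] at h
  exact fin_two_ne_zero h3 (left_eq_add.mp h)

lemma adj_parity {n : ℕ} [NeZero n] (hev : n % 2 = 0) (h2 : 2 ≤ n) {i j : Fin n}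
    (h : (cycleGraph n).Adj i j) : i.val % 2 ≠ j.val % 2 := by
  have key : ∀ a : Fin n, (a + 1).val % 2 ≠ a.val % 2 := by
    intro a
    have ha := a.isLt
    rw [fin_add_one_val h2]
    rcases Nat.lt_or_ge (a.val + 1) n with h' | h'
    · rw [Nat.mod_eq_of_lt h']; omega
    · have hn : a.val + 1 = n := by omega
      rw [hn, Nat.mod_self]; omega
  rw [cyc_adj h2] at h
  rcases h with rfl | rfl
  · exact (key i).symm
  · exact key j

/-! ### Adjacency in the puffer graph -/

variable {n : ℕ} {p : Fin n → ℕ}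

lemma puffer_adj_ll {i j : Fin n} :
    (pufferGraph n p).Adj (Sum.inl i) (Sum.inl j) ↔ (cycleGraph n).Adj i j := by
  rw [pufferGraph, fromRel_adj]
  constructor
  · rintro ⟨-, (⟨i', j', hi, hj, hadj⟩ | ⟨i', x, hi, hj⟩) | (⟨i', j', hi, hj, hadj⟩ | ⟨i', x, hi, hj⟩)⟩
    · obtain rfl := Sum.inl_injective hi
      obtain rfl := Sum.inl_injective hj
      exact hadj
    · exact absurd hj (by simp)
    · obtain rfl := Sum.inl_injective hi
      obtain rfl := Sum.inl_injective hj
      exact hadj.symm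
    · exact absurd hj (by simp)
  · intro h
    exact ⟨by simpa using h.ne, Or.inl (Or.inl ⟨i, j, rfl, rfl, h⟩)⟩

lemma puffer_adj_lr {i : Fin n} {s : Σ i : Fin n, Fin (p i)} :
    (pufferGraph n p).Adj (Sum.inl i) (Sum.inr s) ↔ s.1 = i := by
  rw [pufferGraph, fromRel_adj]
  constructor
  · rintro ⟨-, (⟨i', j', hi, hj, hadj⟩ | ⟨i', x, hi, hj⟩) | (⟨i', j', hi, hj, hadj⟩ | ⟨i', x, hi, hj⟩)⟩
    · exact absurd hj (by simp)
    · obtain rfl := Sum.inl_injective hi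
      obtain rfl := Sum.inr_injective hj
      rfl
    · exact absurd hi (by simp)
    · exact absurd hi (by simp)
  · rintro rfl
    exact ⟨by simp, Or.inl (Or.inr ⟨s.1, s.2, rfl, rfl⟩)⟩

lemma puffer_adj_rr {s t : Σ i : Fin n, Fin (p i)} :
    ¬ (pufferGraph n p).Adj (Sum.inr s) (Sum.inr t) := by
  rw [pufferGraph, fromRel_adj]
  rintro ⟨-, (⟨i', j', hi, hj, hadj⟩ | ⟨i', x, hi, hj⟩) | (⟨i', j', hi, hj, hadj⟩ | ⟨i', x, hi, hj⟩)⟩ <;>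
    exact absurd hi (by simp)

lemma edge_form [NeZero n] (h2 : 2 ≤ n) {e : Sym2 (Fin n ⊕ Σ i : Fin n, Fin (p i))}
    (he : e ∈ (pufferGraph n p).edgeSet) :
    (∃ i : Fin n, e = s(Sum.inl i, Sum.inl (i + 1))) ∨
    (∃ (i : Fin n) (x : Fin (p i)), e = s(Sum.inl i, Sum.inr ⟨i, x⟩)) := by
  induction e using Sym2.ind with
  | _ a b =>
    rw [mem_edgeSet] at he
    match a, b with
    | Sum.inl i, Sum.inl j =>
      rw [puffer_adj_ll, cyc_adj h2] at he
      rcases he with rfl | rfl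
      · exact Or.inl ⟨i, rfl⟩
      · exact Or.inl ⟨j, Sym2.eq_swap⟩
    | Sum.inl i, Sum.inr s =>
      rw [puffer_adj_lr] at he
      obtain ⟨j, x⟩ := s
      cases he
      exact Or.inr ⟨j, x, rfl⟩
    | Sum.inr s, Sum.inl i =>
      rw [adj_comm, puffer_adj_lr] at he
      obtain ⟨j, x⟩ := s
      cases he
      exact Or.inr ⟨j, x, Sym2.eq_swap⟩
    | Sum.inr s, Sum.inr t => exact absurd he puffer_adj_rr

/-! ### The colouring -/

def pcolFun (n : ℕ) (p : Fin n → ℕ) (P : ℕ) [NeZero n] :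
    (Fin n ⊕ Σ i : Fin n, Fin (p i)) → (Fin n ⊕ Σ i : Fin n, Fin (p i)) → ℕ
  | Sum.inl i, Sum.inl j =>
      if j = i + 1 ∧ ¬ i = j + 1 then col i.val
      else if i = j + 1 ∧ ¬ j = i + 1 then col j.val else 0
  | Sum.inl _, Sum.inr s => if s.1.val % 2 = 0 then 4 + s.2.val else 4 + P - s.2.val
  | Sum.inr s, Sum.inl _ => if s.1.val % 2 = 0 then 4 + s.2.val else 4 + P - s.2.val
  | Sum.inr _, Sum.inr _ => 0

lemma pcolFun_symm (P : ℕ) [NeZero n] (a b : Fin n ⊕ Σ i : Fin n, Fin (p i)) :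
    pcolFun n p P a b = pcolFun n p P b a := by
  rcases a with i | s <;> rcases b with j | t <;> simp only [pcolFun]
  split_ifs <;> first | rfl | tauto

noncomputable def pcol (n : ℕ) (p : Fin n → ℕ) (P : ℕ) [NeZero n] :
    Sym2 (Fin n ⊕ Σ i : Fin n, Fin (p i)) → ℕ :=
  Sym2.lift ⟨pcolFun n p P, pcolFun_symm P⟩

lemma pcol_cycle [NeZero n] (h3 : 3 ≤ n) (P : ℕ) (i : Fin n) :
    pcol n p P s(Sum.inl i, Sum.inl (i + 1)) = col i.val := by
  rw [pcol, Sym2.lift_mk]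
  show (if (i + 1 = i + 1 ∧ ¬ i = i + 1 + 1) then col i.val
      else if (i = i + 1 + 1 ∧ ¬ i + 1 = i + 1) then col (i+1).val else 0) = col i.val
  rw [if_pos ⟨rfl, fin_ne_add_two h3 i⟩]

lemma pcol_pend [NeZero n] (P : ℕ) (j i : Fin n) (x : Fin (p i)) :
    pcol n p P s(Sum.inl j, Sum.inr ⟨i, x⟩) =
      if i.val % 2 = 0 then 4 + x.val else 4 + P - x.val := by
  rw [pcol, Sym2.lift_mk]
  rfl

/-! ### Degree lower bound -/

lemma sdeg_lb [NeZero n] (h8 : 8 ≤ n) (i : Fin n) :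
    2 + p i ≤ sdeg (pufferGraph n p) (Sum.inl i) := by
  classical
  have h2 : (2 : ℕ) ≤ n := by omega
  set S : Set (Fin n ⊕ Σ i : Fin n, Fin (p i)) :=
    insert (Sum.inl (i + 1)) (insert (Sum.inl (i - 1))
      (Set.range fun x : Fin (p i) => Sum.inr ⟨i, x⟩)) with hS
  have hinj : Function.Injective fun x : Fin (p i) => (Sum.inr ⟨i, x⟩ :
      Fin n ⊕ Σ i : Fin n, Fin (p i)) := by
    intro x y h
    simpa using h
  have hr : (Set.range fun x : Fin (p i) => (Sum.inr ⟨i, x⟩ :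
      Fin n ⊕ Σ i : Fin n, Fin (p i))).ncard = p i := by
    rw [← Set.image_univ, Set.ncard_image_of_injective _ hinj, Set.ncard_univ,
      Nat.card_eq_fintype_card, Fintype.card_fin]
  have hm1 : (Sum.inl (i - 1) : Fin n ⊕ Σ i : Fin n, Fin (p i)) ∉
      Set.range fun x : Fin (p i) => (Sum.inr ⟨i, x⟩ : Fin n ⊕ Σ i : Fin n, Fin (p i)) := by
    rintro ⟨x, h⟩
    simp at h
  have hne2 : (i + 1 : Fin n) ≠ i - 1 := by
    intro h
    have h' : i + 1 + 1 = i := by rw [h, sub_add_cancel]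
    rw [add_assoc] at h'
    exact fin_two_ne_zero (by omega) (left_eq_add.mp h'.symm)
  have hm2 : (Sum.inl (i + 1) : Fin n ⊕ Σ i : Fin n, Fin (p i)) ∉
      insert (Sum.inl (i - 1)) (Set.range fun x : Fin (p i) =>
        (Sum.inr ⟨i, x⟩ : Fin n ⊕ Σ i : Fin n, Fin (p i))) := by
    rintro (h | ⟨x, h⟩)
    · exact hne2 (Sum.inl_injective h)
    · simp at h
  have hcard : S.ncard = 2 + p i := by
    rw [hS, Set.ncard_insert_of_notMem hm2, Set.ncard_insert_of_notMem hm1, hr]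
    omega
  have hsub : S ⊆ (pufferGraph n p).neighborSet (Sum.inl i) := by
    rintro v (rfl | rfl | ⟨x, rfl⟩)
    · exact puffer_adj_ll.mpr ((cyc_adj h2).mpr (Or.inl rfl))
    · exact puffer_adj_ll.mpr ((cyc_adj h2).mpr (Or.inr (sub_add_cancel i 1).symm))
    · exact puffer_adj_lr.mpr rfl
  rw [sdeg, ← hcard]
  exact Set.ncard_le_ncard hsub (Set.toFinite _)

end PufferAux

/-- Let `G ≠ C_{2k}` be obtained from an even cycle `C_{2k}`, `2k ≥ 6`, `2k ≡ 2 (mod 3)`, by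
attaching pendant edges at cycle vertices. Then the strong chromatic index is at most
`1 + max_{uv ∈ E(C_{2k})} (d(u) + d(v))`. -/
theorem sci_even_cycle_mod2 (k : ℕ) (hk : 3 ≤ k) (hmod : (2 * k) % 3 = 2)
    (p : Fin (2 * k) → ℕ) (hp : ∃ i, 1 ≤ p i) :
    sci (pufferGraph (2 * k) p) ≤ 1 + maxCycleDegSum (2 * k) p := by
  classical
  haveI : NeZero (2 * k) := ⟨by omega⟩
  have h8 : 8 ≤ 2 * k := by omega
  have h3 : (2 * k) % 3 = 2 := hmod
  have hev : (2 * k) % 2 = 0 := by omega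
  have h2 : 2 ≤ 2 * k := by omega
  set P : ℕ := Finset.univ.sup (fun i : Fin (2 * k) => p i + p (i + 1)) with hP
  have hpi_le : ∀ i : Fin (2 * k), p i + p (i + 1) ≤ P := fun i =>
    Finset.le_sup (f := fun i : Fin (2 * k) => p i + p (i + 1)) (Finset.mem_univ i)
  -- `4 + P ≤ M`
  have hPM : 4 + P ≤ maxCycleDegSum (2 * k) p := by
    obtain ⟨i0, -, hi0⟩ := Finset.exists_mem_eq_sup (Finset.univ : Finset (Fin (2 * k)))
      Finset.univ_nonempty (fun i : Fin (2 * k) => p i + p (i + 1))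
    have hadj : (SimpleGraph.cycleGraph (2 * k)).Adj i0 (i0 + 1) :=
      (PufferAux.cyc_adj h2).mpr (Or.inl rfl)
    have hle := Finset.le_sup (f := fun q : Fin (2 * k) × Fin (2 * k) =>
      if (SimpleGraph.cycleGraph (2 * k)).Adj q.1 q.2 then
        sdeg (pufferGraph (2 * k) p) (Sum.inl q.1) + sdeg (pufferGraph (2 * k) p) (Sum.inl q.2)
      else 0) (Finset.mem_univ (i0, i0 + 1))
    simp only at hle
    rw [if_pos hadj] at hle
    have h1 := PufferAux.sdeg_lb (p := p) h8 i0
    have h2' := PufferAux.sdeg_lb (p := p) h8 (i0 + 1)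
    rw [maxCycleDegSum]
    rw [← hP] at hi0
    omega
  apply Nat.sInf_le
  refine ⟨PufferAux.pcol (2 * k) p P, ?_, ?_⟩
  · -- bound
    intro e he
    rcases PufferAux.edge_form h2 he with ⟨i, rfl⟩ | ⟨i, x, rfl⟩
    · rw [PufferAux.pcol_cycle (by omega)]
      have := PufferAux.col_le i.val
      omega
    · rw [PufferAux.pcol_pend]
      have hx : x.val < p i := x.isLt
      have hpi : p i ≤ P := le_trans (Nat.le_add_right _ _) (hpi_le i)
      split_ifs <;> omega
  · -- strong colouring property
    intro e he f hf hne hnear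
    rcases PufferAux.edge_form h2 he with ⟨a, rfl⟩ | ⟨i, x, rfl⟩ <;>
      rcases PufferAux.edge_form h2 hf with ⟨b, rfl⟩ | ⟨j, y, rfl⟩
    · -- cycle-cycle
      rw [PufferAux.pcol_cycle (by omega), PufferAux.pcol_cycle (by omega)]
      have hab : a ≠ b := fun h => hne (by rw [h])
      have key : b = a + 1 ∨ b = a + 1 + 1 ∨ a = b + 1 ∨ a = b + 1 + 1 := by
        rcases hnear with ⟨v, hv1, hv2⟩ | ⟨v, w, hv, hw, hadj⟩
        · rw [Sym2.mem_iff] at hv1 hv2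
          rcases hv1 with rfl | rfl <;> rcases hv2 with h | h
          · exact absurd (Sum.inl_injective h) hab
          · exact Or.inr (Or.inr (Or.inl (Sum.inl_injective h)))
          · exact Or.inl (Sum.inl_injective h).symm
          · exact absurd (add_right_cancel (Sum.inl_injective h)) hab
        · rw [Sym2.mem_iff] at hv hw
          rcases hv with rfl | rfl <;> rcases hw with rfl | rfl <;>
            rw [PufferAux.puffer_adj_ll, PufferAux.cyc_adj h2] at hadj <;>
            rcases hadj with h | h
          · exact Or.inl h
          · exact Or.inr (Or.inr (Or.inl h))
          · exact absurd (add_right_cancel h) hab.symm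
          · exact Or.inr (Or.inr (Or.inr h))
          · exact Or.inr (Or.inl h)
          · exact absurd (add_right_cancel h) hab
          · exact Or.inl (add_right_cancel h)
          · exact Or.inr (Or.inr (Or.inl (add_right_cancel h)))
      rcases key with h | h | h | h
      · exact PufferAux.colF h8 h3 a b (Or.inl h)
      · exact PufferAux.colF h8 h3 a b (Or.inr h)
      · exact (PufferAux.colF h8 h3 b a (Or.inl h)).symm
      · exact (PufferAux.colF h8 h3 b a (Or.inr h)).symm
    · -- cycle-pendant
      rw [PufferAux.pcol_cycle (by omega), PufferAux.pcol_pend]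
      have := PufferAux.col_le a.val
      have hy : y.val < p j := y.isLt
      have hpj : p j ≤ P := le_trans (Nat.le_add_right _ _) (hpi_le j)
      split_ifs <;> omega
    · -- pendant-cycle
      rw [PufferAux.pcol_cycle (by omega), PufferAux.pcol_pend]
      have := PufferAux.col_le b.val
      have hx : x.val < p i := x.isLt
      have hpi : p i ≤ P := le_trans (Nat.le_add_right _ _) (hpi_le i)
      split_ifs <;> omega
    · -- pendant-pendant
      rw [PufferAux.pcol_pend, PufferAux.pcol_pend]
      have key : i = j ∨ (SimpleGraph.cycleGraph (2 * k)).Adj i j := by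
        rcases hnear with ⟨v, hv1, hv2⟩ | ⟨v, w, hv, hw, hadj⟩
        · rw [Sym2.mem_iff] at hv1 hv2
          rcases hv1 with rfl | rfl <;> rcases hv2 with h | h
          · exact Or.inl (Sum.inl_injective h)
          · exact absurd h (by simp)
          · exact absurd h (by simp)
          · exact Or.inl (congrArg Sigma.fst (Sum.inr_injective h))
        · rw [Sym2.mem_iff] at hv hw
          rcases hv with rfl | rfl <;> rcases hw with rfl | rfl
          · exact Or.inr (PufferAux.puffer_adj_ll.mp hadj)
          · exact Or.inl (PufferAux.puffer_adj_lr.mp hadj).symm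
          · exact Or.inl (PufferAux.puffer_adj_lr.mp hadj.symm)
          · exact absurd hadj PufferAux.puffer_adj_rr
      have hx : x.val < p i := x.isLt
      have hy : y.val < p j := y.isLt
      rcases key with rfl | hadj
      · have hxy : x.val ≠ y.val := by
          intro h
          exact hne (by rw [Fin.val_injective h])
        have hpi : p i ≤ P := le_trans (Nat.le_add_right _ _) (hpi_le i)
        split_ifs <;> omega
      · have hpar := PufferAux.adj_parity hev h2 hadj
        have hsum : p i + p j ≤ P := by
          rcases (PufferAux.cyc_adj h2).mp hadj with h | h
          · rw [h]; exact hpi_le i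
          · rw [h]; have := hpi_le j; omega
        split_ifs <;> omega
end
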